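/- For m, n ≥ 2 and η ≥ 1, if p ≥ min{1, (m+n)((1+η) log(mn) + 1)/((m−1)(n−1))}, then the random bipartite graph G(m,n,p) is connected with probability at least 1 − 2(mn)^{−η} − 4(mn)^{−2η}. -/

import Mathlib

set_option maxHeartbeats 1000000

open scoped Classical

/-- Probability of an event in the product Bernoulli(p) measure on configurations
`α → Bool` (each coordinate independently `true` with probability `p`). -/
noncomputable def pr {α : Type*} [Fintype α] (p : ℝ) (A : Set (α → Bool)) : ℝ :=
  ∑ ω ∈ Finset.univ.filter (fun ω => ω ∈ A), ∏ e : α, (if ω e = true then p else 1 - p)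

/-- The random bipartite graph on parts `Fin m` and `Fin n` determined by a
configuration of cross-edge indicators. -/
def bipGraph (m n : ℕ) (ω : Fin m × Fin n → Bool) : SimpleGraph (Fin m ⊕ Fin n) :=
  SimpleGraph.fromRel
    (fun x y => ∃ i j, x = Sum.inl i ∧ y = Sum.inr j ∧ ω (i, j) = true)

open Finset

namespace PrAux

noncomputable def evf {α : Type*} [Fintype α] (A : Set (α → Bool)) : Finset (α → Bool) :=
  @Finset.filter _ (fun ω => ω ∈ A) (fun _ => Classical.propDecidable _) Finset.univ

noncomputable def wgt {α : Type*} [Fintype α] (p : ℝ) (ω : α → Bool) : ℝ :=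
  ∏ e : α, (if ω e = true then p else 1 - p)


section ProbLemmas
variable {α : Type*} [Fintype α] {p : ℝ}

lemma mem_evf {A : Set (α → Bool)} {ω : α → Bool} : ω ∈ evf A ↔ ω ∈ A := by
  simp [evf]

lemma pr_eq (A : Set (α → Bool)) : pr p A = ∑ ω ∈ evf A, wgt p ω := rfl

lemma wgt_nonneg (hp0 : 0 ≤ p) (hp1 : p ≤ 1) (ω : α → Bool) : 0 ≤ wgt p ω := by
  apply Finset.prod_nonneg
  intro e _
  split <;> linarith

lemma pr_nonneg (hp0 : 0 ≤ p) (hp1 : p ≤ 1) (A : Set (α → Bool)) : 0 ≤ pr p A :=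
  Finset.sum_nonneg fun ω _ => wgt_nonneg hp0 hp1 ω

lemma pr_mono (hp0 : 0 ≤ p) (hp1 : p ≤ 1) {A B : Set (α → Bool)} (h : A ⊆ B) :
    pr p A ≤ pr p B := by
  rw [pr_eq, pr_eq]
  apply Finset.sum_le_sum_of_subset_of_nonneg
  · intro ω hω
    rw [mem_evf] at *
    exact h hω
  · intro ω _ _; exact wgt_nonneg hp0 hp1 ω

lemma pr_allfalse (hp0 : 0 ≤ p) (hp1 : p ≤ 1) (S : Finset α) :
    pr p {ω : α → Bool | ∀ e ∈ S, ω e = false} = (1 - p) ^ S.card := by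
  classical
  rw [pr_eq]
  have hfil : evf {ω : α → Bool | ∀ e ∈ S, ω e = false}
      = Fintype.piFinset (fun e => if e ∈ S then ({false} : Finset Bool) else Finset.univ) := by
    ext ω
    rw [mem_evf]
    simp only [Set.mem_setOf_eq, Fintype.mem_piFinset]
    constructor
    · intro h e
      by_cases he : e ∈ S <;> simp [he, h e]
    · intro h e he
      have := h e
      simp [he] at this
      exact this
  rw [hfil]
  unfold wgt
  rw [← Finset.prod_univ_sum (fun e => if e ∈ S then ({false} : Finset Bool) else Finset.univ) (fun _ b => if b = true then p else 1 - p)]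
  have h2 : ∀ e : α, (∑ b ∈ (if e ∈ S then ({false} : Finset Bool) else Finset.univ),
      (if b = true then p else 1 - p)) = if e ∈ S then (1 - p) else 1 := by
    intro e
    by_cases he : e ∈ S <;> simp [he]
  rw [Finset.prod_congr rfl (fun e _ => h2 e)]
  rw [Finset.prod_ite_mem Finset.univ S (fun _ => (1:ℝ) - p)]
  simp [Finset.prod_const]

lemma pr_univ (hp0 : 0 ≤ p) (hp1 : p ≤ 1) : pr p (Set.univ : Set (α → Bool)) = 1 := by
  have := pr_allfalse (α := α) hp0 hp1 ∅
  simpa using this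

lemma pr_compl (hp0 : 0 ≤ p) (hp1 : p ≤ 1) (A : Set (α → Bool)) :
    pr p A = 1 - pr p Aᶜ := by
  have hsd : evf Aᶜ = Finset.univ \ evf A := by
    ext ω
    simp [mem_evf]
  have h : pr p A + pr p Aᶜ = 1 := by
    rw [← pr_univ (α := α) hp0 hp1, pr_eq, pr_eq, pr_eq, hsd]
    have huniv : evf (Set.univ : Set (α → Bool)) = Finset.univ := by
      ext ω; simp [mem_evf]
    rw [huniv, add_comm]
    exact Finset.sum_sdiff (Finset.subset_univ _)
  linarith

lemma pr_union_le (hp0 : 0 ≤ p) (hp1 : p ≤ 1) (A B : Set (α → Bool)) :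
    pr p (A ∪ B) ≤ pr p A + pr p B := by
  rw [pr_eq, pr_eq, pr_eq]
  have hsub : evf (A ∪ B) ⊆ evf A ∪ evf B := by
    intro ω
    simp only [Finset.mem_union, mem_evf, Set.mem_union]
    tauto
  have h1 : ∑ ω ∈ evf (A ∪ B), wgt p ω ≤ ∑ ω ∈ evf A ∪ evf B, wgt p ω :=
    Finset.sum_le_sum_of_subset_of_nonneg hsub (fun ω _ _ => wgt_nonneg hp0 hp1 ω)
  refine h1.trans ?_
  have h2 := Finset.sum_union_inter (s₁ := evf A) (s₂ := evf B) (f := wgt p)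
  have h3 : 0 ≤ ∑ ω ∈ evf A ∩ evf B, wgt p ω :=
    Finset.sum_nonneg fun ω _ => wgt_nonneg hp0 hp1 ω
  linarith

lemma pr_biUnion_le {ι : Type*} (hp0 : 0 ≤ p) (hp1 : p ≤ 1) (s : Finset ι)
    (f : ι → Set (α → Bool)) :
    pr p (⋃ i ∈ s, f i) ≤ ∑ i ∈ s, pr p (f i) := by
  classical
  induction s using Finset.cons_induction with
  | empty =>
    simp only [Finset.notMem_empty, Set.iUnion_of_empty, Set.iUnion_empty, Finset.sum_empty]
    rw [pr_eq]
    have : evf (∅ : Set (α → Bool)) = ∅ := by ext ω; simp [mem_evf]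
    simp [this]
  | cons a s ha ih =>
    rw [Finset.sum_cons]
    have h : (⋃ i ∈ Finset.cons a s ha, f i) = f a ∪ ⋃ i ∈ s, f i := by
      simp [Finset.cons_eq_insert, Set.biUnion_insert]
    rw [h]
    exact (pr_union_le hp0 hp1 _ _).trans (by linarith)

end ProbLemmas

section GraphLemmas


variable {m n : ℕ}

lemma bip_adj {ω : Fin m × Fin n → Bool} {i : Fin m} {j : Fin n} :
    (bipGraph m n ω).Adj (Sum.inl i) (Sum.inr j) ↔ ω (i, j) = true := by
  rw [bipGraph, SimpleGraph.fromRel_adj]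
  constructor
  · rintro ⟨-, (⟨i', j', hi, hj, h⟩ | ⟨i', j', hi, hj, h⟩)⟩
    · cases hi; cases hj; exact h
    · exact absurd hi (by simp)
  · intro h
    exact ⟨by simp, Or.inl ⟨i, j, rfl, rfl, h⟩⟩

lemma bip_alltrue_connected (hm : 0 < m) (hn : 0 < n) :
    (bipGraph m n (fun _ => true)).Connected := by
  rw [SimpleGraph.connected_iff]
  constructor
  · have key : ∀ u, (bipGraph m n (fun _ => true)).Reachable u (Sum.inl ⟨0, hm⟩) := by
      intro u
      match u with
      | Sum.inl i =>
        have h1 : (bipGraph m n (fun _ => true)).Adj (Sum.inl i) (Sum.inr ⟨0, hn⟩) :=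
          bip_adj.mpr rfl
        have h2 : (bipGraph m n (fun _ => true)).Adj (Sum.inl ⟨0, hm⟩) (Sum.inr ⟨0, hn⟩) :=
          bip_adj.mpr rfl
        exact h1.reachable.trans h2.reachable.symm
      | Sum.inr j =>
        exact ((bip_adj.mpr rfl : (bipGraph m n (fun _ => true)).Adj
          (Sum.inl ⟨0, hm⟩) (Sum.inr j)).reachable).symm
    intro u v
    exact (key u).trans (key v).symm
  · exact ⟨Sum.inl ⟨0, hm⟩⟩

noncomputable def cutF (m n : ℕ) (A : Finset (Fin m)) (B : Finset (Fin n)) :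
    Finset (Fin m × Fin n) :=
  Finset.univ.filter (fun e => (e.1 ∈ A ∧ e.2 ∉ B) ∨ (e.1 ∉ A ∧ e.2 ∈ B))

lemma card_cutF (A : Finset (Fin m)) (B : Finset (Fin n)) :
    (cutF m n A B).card = A.card * (n - B.card) + (m - A.card) * B.card := by
  classical
  have h : cutF m n A B = (A ×ˢ Bᶜ) ∪ (Aᶜ ×ˢ B) := by
    ext e
    simp [cutF, Finset.mem_product]
  rw [h, Finset.card_union_of_disjoint]
  · rw [Finset.card_product, Finset.card_product, Finset.card_compl, Finset.card_compl]
    simp [Fintype.card_fin]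
  · rw [Finset.disjoint_left]
    rintro e he he'
    rw [Finset.mem_product] at he he'
    simp at he he'
    tauto

/-- If the graph is disconnected, some proper cut has all its edges absent. -/
lemma disconn_cut (hm : 0 < m) {ω : Fin m × Fin n → Bool}
    (h : ¬ (bipGraph m n ω).Connected) :
    ∃ P : Finset (Fin m) × Finset (Fin n),
      (¬(P.1 = ∅ ∧ P.2 = ∅) ∧ ¬(P.1 = Finset.univ ∧ P.2 = Finset.univ)) ∧
      ∀ e ∈ cutF m n P.1 P.2, ω e = false := by
  classical
  set G := bipGraph m n ω with hG
  rw [SimpleGraph.connected_iff] at h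
  push_neg at h
  have hne : Nonempty (Fin m ⊕ Fin n) := ⟨Sum.inl ⟨0, hm⟩⟩
  have hpre : ¬ G.Preconnected := fun hp => (h hp).false hne.some
  rw [SimpleGraph.Preconnected] at hpre
  push_neg at hpre
  obtain ⟨u, v, huv⟩ := hpre
  set A : Finset (Fin m) := Finset.univ.filter (fun i => G.Reachable u (Sum.inl i)) with hA
  set B : Finset (Fin n) := Finset.univ.filter (fun j => G.Reachable u (Sum.inr j)) with hB
  have memA : ∀ i : Fin m, i ∈ A ↔ G.Reachable u (Sum.inl i) := by
    intro i; rw [hA, Finset.mem_filter]; simp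
  have memB : ∀ j : Fin n, j ∈ B ↔ G.Reachable u (Sum.inr j) := by
    intro j; rw [hB, Finset.mem_filter]; simp
  refine ⟨(A, B), ⟨?_, ?_⟩, ?_⟩
  · rintro ⟨h1, h2⟩
    dsimp only at h1 h2
    rcases u with i | j
    · have : i ∈ A := (memA i).mpr (SimpleGraph.Reachable.refl _)
      rw [h1] at this
      exact absurd this (Finset.notMem_empty i)
    · have : j ∈ B := (memB j).mpr (SimpleGraph.Reachable.refl _)
      rw [h2] at this
      exact absurd this (Finset.notMem_empty j)
  · rintro ⟨h1, h2⟩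
    dsimp only at h1 h2
    rcases v with i | j
    · exact huv ((memA i).mp (h1 ▸ Finset.mem_univ i))
    · exact huv ((memB j).mp (h2 ▸ Finset.mem_univ j))
  · rintro ⟨i, j⟩ he
    by_contra hf
    have htrue : ω (i, j) = true := by
      cases hb : ω (i, j)
      · exact absurd hb hf
      · rfl
    have hadj : G.Adj (Sum.inl i) (Sum.inr j) := bip_adj.mpr htrue
    simp only [cutF, Finset.mem_filter, Finset.mem_univ, true_and] at he
    rcases he with ⟨hi, hj⟩ | ⟨hi, hj⟩
    · exact hj ((memB j).mpr (((memA i).mp hi).trans hadj.reachable))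
    · exact hi ((memA i).mpr (((memB j).mp hj).trans hadj.reachable.symm))


end GraphLemmas

/-- Pure real core inequality. -/
lemma main_core (M N A B S T η logm logn : ℝ)
    (hM : 2 ≤ M) (hN : 2 ≤ N) (hη : 1 ≤ η)
    (hA0 : 0 ≤ A) (hAM : A ≤ M) (hB0 : 0 ≤ B) (hBN : B ≤ N)
    (hlogm : 0 < logm) (hlogn : 0 < logn)
    (hS : S = A ∨ S = M - A) (hT : T = B ∨ T = N - B)
    (hSA : S ≤ A) (hSA' : S ≤ M - A) (hTB : T ≤ B) (hTB' : T ≤ N - B)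
    (hbig : 2 ≤ S + T ∨ (S + T ≤ 1 ∧ (M - 1) * (N - 1) ≤ A * (N - B) + (M - A) * B)) :
    S * logm + T * logn + ((1 + η) * (logm + logn) + 1)
      ≤ ((M + N) * ((1 + η) * (logm + logn) + 1) / ((M - 1) * (N - 1))) *
        (A * (N - B) + (M - A) * B) := by
  obtain ⟨L, hL⟩ : ∃ L, L = logm + logn := ⟨_, rfl⟩
  obtain ⟨K, hK⟩ : ∃ K, K = (1 + η) * L + 1 := ⟨_, rfl⟩
  obtain ⟨F, hF⟩ : ∃ F, F = A * (N - B) + (M - A) * B := ⟨_, rfl⟩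
  obtain ⟨Dd, hDd⟩ : ∃ Dd, Dd = (M - 1) * (N - 1) := ⟨_, rfl⟩
  obtain ⟨G, hG⟩ : ∃ G, G = S * N + T * M - 2 * S * T := ⟨_, rfl⟩
  have hL0 : 0 < L := by rw [hL]; linarith
  have hK0 : 0 < K := by rw [hK]; nlinarith
  have hK2L : 2 * L + 1 ≤ K := by rw [hK]; nlinarith
  have hDd0 : 0 < Dd := by rw [hDd]; nlinarith
  have hDdMN : Dd ≤ M * N := by rw [hDd]; nlinarith
  have hS0 : 0 ≤ S := by rcases hS with h | h <;> linarith
  have hT0 : 0 ≤ T := by rcases hT with h | h <;> linarith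
  have hs2 : 2 * S ≤ M := by linarith
  have ht2 : 2 * T ≤ N := by linarith
  have goal_eq : ((M + N) * ((1 + η) * (logm + logn) + 1) / ((M - 1) * (N - 1))) *
        (A * (N - B) + (M - A) * B) = (M + N) * K / Dd * F := by
    rw [hK, hL, hF, hDd]
  rw [goal_eq]
  have lhs_eq : S * logm + T * logn + ((1 + η) * (logm + logn) + 1)
      = S * logm + T * logn + K := by rw [hK, hL]
  rw [lhs_eq]
  -- Claim A : G ≤ F
  have hGF : G ≤ F := by
    rw [hG, hF]
    rcases hS with h1 | h1 <;> rcases hT with h2 | h2 <;> rw [h1, h2]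
    · have : A * (N - B) + (M - A) * B = A * N + B * M - 2 * A * B := by ring
      linarith
    · nlinarith [mul_nonneg (by linarith : (0:ℝ) ≤ M - 2 * A)
        (by linarith : (0:ℝ) ≤ 2 * B - N)]
    · nlinarith [mul_nonneg (by linarith : (0:ℝ) ≤ 2 * A - M)
        (by linarith : (0:ℝ) ≤ N - 2 * B)]
    · have : A * (N - B) + (M - A) * B
          = (M - A) * N + (N - B) * M - 2 * (M - A) * (N - B) := by ring
      linarith
  have hG0 : 0 ≤ G := by
    rw [hG]; nlinarith [mul_nonneg hS0 (by linarith : (0:ℝ) ≤ N - 2 * T)]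
  have hF0 : 0 ≤ F := le_trans hG0 hGF
  rcases hbig with hST | hFD
  · -- main case
    have h2 : (S + T) * (M * N) ≤ (M + N) * G := by
      rw [hG]
      nlinarith [mul_nonneg (mul_nonneg hS0 (by linarith : (0:ℝ) ≤ N))
          (by linarith : (0:ℝ) ≤ N - 2 * T),
        mul_nonneg (mul_nonneg hT0 (by linarith : (0:ℝ) ≤ M))
          (by linarith : (0:ℝ) ≤ M - 2 * S)]
    have h3 : S * logm + T * logn + K ≤ K * (S + T) := by
      have e1 : (2 * L + 1) * (S + T - 1) ≤ K * (S + T - 1) :=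
        mul_le_mul_of_nonneg_right hK2L (by linarith)
      have e2 : S * logm + T * logn ≤ (2 * L + 1) * (S + T - 1) := by
        rw [hL]
        nlinarith [mul_nonneg (by linarith : (0:ℝ) ≤ S + 2*T - 2) hlogm.le,
          mul_nonneg (by linarith : (0:ℝ) ≤ 2*S + T - 2) hlogn.le]
      linarith
    have hc1 : K * (S + T) ≤ (M + N) * K / Dd * F := by
      rw [div_mul_eq_mul_div, le_div_iff₀ hDd0]
      have e3 : K * (S + T) * Dd ≤ K * (S + T) * (M * N) :=
        mul_le_mul_of_nonneg_left hDdMN (by positivity)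
      have e4 : K * ((S + T) * (M * N)) ≤ K * ((M + N) * G) :=
        mul_le_mul_of_nonneg_left h2 hK0.le
      have e5 : K * (M + N) * G ≤ K * (M + N) * F :=
        mul_le_mul_of_nonneg_left hGF (by positivity)
      nlinarith
    linarith
  · -- boundary case
    obtain ⟨hST1, hFD⟩ := hFD
    rw [← hF, ← hDd] at hFD
    have hRHS : S * logm + T * logn + K ≤ L + K := by
      rw [hL]
      nlinarith [mul_nonneg hS0 hlogn.le, mul_nonneg hT0 hlogm.le,
        mul_nonneg (by linarith : (0:ℝ) ≤ 1 - S - T)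
          (by linarith : (0:ℝ) ≤ logm + logn)]
    have hLK : L + K ≤ 4 * K := by
      have : L ≤ K := by rw [hK]; nlinarith
      linarith
    have hfin : 4 * K ≤ (M + N) * K / Dd * F := by
      rw [div_mul_eq_mul_div, le_div_iff₀ hDd0]
      have h4 : 4 ≤ M + N := by linarith
      nlinarith [mul_le_mul_of_nonneg_left hFD (by positivity : (0:ℝ) ≤ (M + N) * K),
        mul_nonneg hK0.le hDd0.le]
    linarith



section Analytic
variable {m n : ℕ} {η p : ℝ}

/-- The number of absent cut edges, cast. -/
lemma cast_f {a b : ℕ} (ham : a ≤ m) (hbn : b ≤ n) :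
    ((a * (n - b) + (m - a) * b : ℕ) : ℝ)
      = (a : ℝ) * ((n : ℝ) - b) + ((m : ℝ) - a) * b := by
  push_cast [Nat.cast_sub ham, Nat.cast_sub hbn]
  ring

lemma pow_one_sub_le (hp1 : p ≤ 1) (hc : 0 ≤ p) (k : ℕ) (x : ℝ) (hx : x ≤ p * k) :
    (1 - p) ^ k ≤ Real.exp (-x) := by
  have h1 : 1 - p ≤ Real.exp (-p) := by
    have := Real.add_one_le_exp (-p)
    linarith
  have h2 : (1 - p) ^ k ≤ Real.exp (-p) ^ k :=
    pow_le_pow_left₀ (by linarith) h1 k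
  have h3 : Real.exp (-p) ^ k = Real.exp (-(p * k)) := by
    rw [← Real.exp_nat_mul]
    ring_nf
  rw [h3] at h2
  exact h2.trans (Real.exp_le_exp.mpr (by linarith))

lemma choose_le_pow_min (a : ℕ) (ham : a ≤ m) :
    ((m.choose a : ℕ) : ℝ) ≤ (m : ℝ) ^ (min a (m - a)) := by
  rcases le_total a (m - a) with h | h
  · rw [min_eq_left h]
    exact_mod_cast Nat.choose_le_pow m a
  · rw [min_eq_right h]
    rw [← Nat.choose_symm ham]
    exact_mod_cast Nat.choose_le_pow m (m - a)

lemma pow_eq_exp (k : ℕ) (hm : 2 ≤ m) :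
    ((m : ℝ)) ^ k = Real.exp (k * Real.log m) := by
  rw [Real.exp_nat_mul, Real.exp_log]
  have : (0:ℕ) < m := by omega
  exact_mod_cast this

/-- Per-term bound for non-special proper profiles. -/
lemma rest_term (a b : ℕ) (hm : 2 ≤ m) (hn : 2 ≤ n) (ham : a ≤ m) (hbn : b ≤ n)
    (hη : 1 ≤ η) (hp1 : p ≤ 1)
    (hc : ((m:ℝ)+n) * ((1+η) * Real.log ((m:ℝ)*n) + 1) / (((m:ℝ)-1)*((n:ℝ)-1)) ≤ p)
    (hprop1 : ¬(a = 0 ∧ b = 0)) (hprop2 : ¬(a = m ∧ b = n))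
    (hsp1 : ¬(a = 1 ∧ b = 0)) (hsp2 : ¬(a = 0 ∧ b = 1))
    (hsp3 : ¬(a = m - 1 ∧ b = n)) (hsp4 : ¬(a = m ∧ b = n - 1)) :
    (m.choose a : ℝ) * (n.choose b : ℝ) * (1-p)^(a * (n - b) + (m - a) * b)
      ≤ Real.exp (-((1+η) * Real.log ((m:ℝ)*n) + 1)) := by
  have hM : (2:ℝ) ≤ (m:ℝ) := by exact_mod_cast hm
  have hN : (2:ℝ) ≤ (n:ℝ) := by exact_mod_cast hn
  have hlogm : 0 < Real.log (m:ℝ) := Real.log_pos (by linarith)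
  have hlogn : 0 < Real.log (n:ℝ) := Real.log_pos (by linarith)
  have hLmul : Real.log ((m:ℝ)*n) = Real.log (m:ℝ) + Real.log (n:ℝ) :=
    Real.log_mul (by linarith) (by linarith)
  have hc0 : 0 ≤ ((m:ℝ)+n) * ((1+η) * Real.log ((m:ℝ)*n) + 1) / (((m:ℝ)-1)*((n:ℝ)-1)) := by
    have h1 : 0 < ((m:ℝ)-1)*((n:ℝ)-1) := by nlinarith
    have h2 : 0 ≤ ((m:ℝ)+n) * ((1+η) * Real.log ((m:ℝ)*n) + 1) := by
      rw [hLmul]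
      apply mul_nonneg (by linarith)
      nlinarith
    positivity
  have hp0 : 0 ≤ p := le_trans hc0 hc
  set s := min a (m - a) with hs
  set t := min b (n - b) with ht
  -- the key inequality from main_core
  have key : (s : ℝ) * Real.log (m:ℝ) + (t : ℝ) * Real.log (n:ℝ)
      + ((1+η) * Real.log ((m:ℝ)*n) + 1)
      ≤ (((m:ℝ)+n) * ((1+η) * Real.log ((m:ℝ)*n) + 1) / (((m:ℝ)-1)*((n:ℝ)-1))) *
        ((a : ℝ) * ((n : ℝ) - b) + ((m : ℝ) - a) * b) := by
    rw [hLmul]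
    have hScases : (s : ℝ) = a ∨ (s : ℝ) = (m:ℝ) - a := by
      rcases le_total a (m - a) with h | h
      · left; rw [hs, min_eq_left h]
      · right; rw [hs, min_eq_right h]; push_cast [Nat.cast_sub ham]; ring
    have hTcases : (t : ℝ) = b ∨ (t : ℝ) = (n:ℝ) - b := by
      rcases le_total b (n - b) with h | h
      · left; rw [ht, min_eq_left h]
      · right; rw [ht, min_eq_right h]; push_cast [Nat.cast_sub hbn]; ring
    have hSA : (s:ℝ) ≤ a := by
      have : s ≤ a := min_le_left _ _
      exact_mod_cast this
    have hSA' : (s:ℝ) ≤ (m:ℝ) - a := by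
      have h1 : s ≤ m - a := min_le_right _ _
      have h2 : (s:ℝ) ≤ ((m - a : ℕ) : ℝ) := by exact_mod_cast h1
      rwa [Nat.cast_sub ham] at h2
    have hTB : (t:ℝ) ≤ b := by
      have : t ≤ b := min_le_left _ _
      exact_mod_cast this
    have hTB' : (t:ℝ) ≤ (n:ℝ) - b := by
      have h1 : t ≤ n - b := min_le_right _ _
      have h2 : (t:ℝ) ≤ ((n - b : ℕ) : ℝ) := by exact_mod_cast h1
      rwa [Nat.cast_sub hbn] at h2
    have hbig : 2 ≤ (s:ℝ) + t ∨ ((s:ℝ) + t ≤ 1 ∧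
        ((m:ℝ) - 1) * ((n:ℝ) - 1) ≤ (a:ℝ) * ((n:ℝ) - b) + ((m:ℝ) - a) * b) := by
      by_cases h2st : 2 ≤ s + t
      · left; exact_mod_cast h2st
      · right
        constructor
        · have : s + t ≤ 1 := by omega
          exact_mod_cast this
        · have hcase : (a = 0 ∧ b = n) ∨ (a = m ∧ b = 0) ∨ (a = 1 ∧ b = n)
              ∨ (a + 1 = m ∧ b = 0) ∨ (a = 0 ∧ b + 1 = n) ∨ (a = m ∧ b = 1) := by
            omega
          rcases hcase with ⟨h1, h2⟩ | ⟨h1, h2⟩ | ⟨h1, h2⟩ | ⟨h1, h2⟩ | ⟨h1, h2⟩ | ⟨h1, h2⟩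
          · subst h1; subst h2
            push_cast
            nlinarith
          · subst h1; subst h2
            push_cast
            nlinarith
          · subst h1; subst h2
            push_cast
            nlinarith
          · subst h2
            have hA : (a : ℝ) = (m:ℝ) - 1 := by
              have : ((a:ℕ) : ℝ) + 1 = (m:ℝ) := by exact_mod_cast h1
              linarith
            rw [hA]
            push_cast
            nlinarith
          · subst h1
            have hB : (b : ℝ) = (n:ℝ) - 1 := by
              have : ((b:ℕ) : ℝ) + 1 = (n:ℝ) := by exact_mod_cast h2
              linarith
            rw [hB]
            push_cast
            nlinarith
          · subst h1; subst h2
            push_cast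
            nlinarith
    exact main_core (m:ℝ) (n:ℝ) a b s t η (Real.log (m:ℝ)) (Real.log (n:ℝ))
      hM hN hη (Nat.cast_nonneg a) (by exact_mod_cast ham) (Nat.cast_nonneg b)
      (by exact_mod_cast hbn) hlogm hlogn hScases hTcases hSA hSA' hTB hTB'
      hbig
  -- assemble
  have hf0 : (0:ℝ) ≤ (a : ℝ) * ((n : ℝ) - b) + ((m : ℝ) - a) * b := by
    have h1 : (a:ℝ) ≤ (m:ℝ) := by exact_mod_cast ham
    have h2 : (b:ℝ) ≤ (n:ℝ) := by exact_mod_cast hbn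
    have := Nat.cast_nonneg (α := ℝ) a
    have := Nat.cast_nonneg (α := ℝ) b
    nlinarith
  have hexp : (1-p)^(a * (n - b) + (m - a) * b)
      ≤ Real.exp (-((((m:ℝ)+n) * ((1+η) * Real.log ((m:ℝ)*n) + 1) /
          (((m:ℝ)-1)*((n:ℝ)-1))) * ((a : ℝ) * ((n : ℝ) - b) + ((m : ℝ) - a) * b))) := by
    apply pow_one_sub_le hp1 hp0
    rw [cast_f ham hbn]
    exact mul_le_mul_of_nonneg_right hc hf0
  calc (m.choose a : ℝ) * (n.choose b : ℝ) * (1-p)^(a * (n - b) + (m - a) * b)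
      ≤ (m:ℝ)^s * (n:ℝ)^t * Real.exp (-((((m:ℝ)+n) * ((1+η) * Real.log ((m:ℝ)*n) + 1) /
          (((m:ℝ)-1)*((n:ℝ)-1))) * ((a : ℝ) * ((n : ℝ) - b) + ((m : ℝ) - a) * b))) := by
        apply mul_le_mul
        · apply mul_le_mul (choose_le_pow_min a ham) (choose_le_pow_min b hbn)
            (Nat.cast_nonneg _) (by positivity)
        · exact hexp
        · exact pow_nonneg (by linarith) _
        · positivity
    _ ≤ Real.exp (-((1+η) * Real.log ((m:ℝ)*n) + 1)) := by
        rw [pow_eq_exp s hm, pow_eq_exp t hn, ← Real.exp_add, ← Real.exp_add]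
        apply Real.exp_le_exp.mpr
        linarith [key]


end Analytic

section Special
variable {m n : ℕ} {η p : ℝ}
lemma K_le_cn (hm : 2 ≤ m) (hn : 2 ≤ n) (hη : 1 ≤ η) :
    (1+η) * Real.log ((m:ℝ)*n) + 1
      ≤ (((m:ℝ)+n) * ((1+η) * Real.log ((m:ℝ)*n) + 1) / (((m:ℝ)-1)*((n:ℝ)-1))) * n := by
  have hM : (2:ℝ) ≤ (m:ℝ) := by exact_mod_cast hm
  have hN : (2:ℝ) ≤ (n:ℝ) := by exact_mod_cast hn
  have hlogm : 0 < Real.log (m:ℝ) := Real.log_pos (by linarith)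
  have hlogn : 0 < Real.log (n:ℝ) := Real.log_pos (by linarith)
  have hLmul : Real.log ((m:ℝ)*n) = Real.log (m:ℝ) + Real.log (n:ℝ) :=
    Real.log_mul (by linarith) (by linarith)
  have hK0 : 0 < (1+η) * Real.log ((m:ℝ)*n) + 1 := by rw [hLmul]; nlinarith
  have hDd0 : (0:ℝ) < ((m:ℝ)-1)*((n:ℝ)-1) := by nlinarith
  rw [div_mul_eq_mul_div, le_div_iff₀ hDd0]
  nlinarith [mul_nonneg hK0.le (by nlinarith : (0:ℝ) ≤ ((m:ℝ)+n) * n - ((m:ℝ)-1)*((n:ℝ)-1))]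

lemma K_le_cm (hm : 2 ≤ m) (hn : 2 ≤ n) (hη : 1 ≤ η) :
    (1+η) * Real.log ((m:ℝ)*n) + 1
      ≤ (((m:ℝ)+n) * ((1+η) * Real.log ((m:ℝ)*n) + 1) / (((m:ℝ)-1)*((n:ℝ)-1))) * m := by
  have hM : (2:ℝ) ≤ (m:ℝ) := by exact_mod_cast hm
  have hN : (2:ℝ) ≤ (n:ℝ) := by exact_mod_cast hn
  have hlogm : 0 < Real.log (m:ℝ) := Real.log_pos (by linarith)
  have hlogn : 0 < Real.log (n:ℝ) := Real.log_pos (by linarith)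
  have hLmul : Real.log ((m:ℝ)*n) = Real.log (m:ℝ) + Real.log (n:ℝ) :=
    Real.log_mul (by linarith) (by linarith)
  have hK0 : 0 < (1+η) * Real.log ((m:ℝ)*n) + 1 := by rw [hLmul]; nlinarith
  have hDd0 : (0:ℝ) < ((m:ℝ)-1)*((n:ℝ)-1) := by nlinarith
  rw [div_mul_eq_mul_div, le_div_iff₀ hDd0]
  nlinarith [mul_nonneg hK0.le (by nlinarith : (0:ℝ) ≤ ((m:ℝ)+n) * m - ((m:ℝ)-1)*((n:ℝ)-1))]

/-- Per-term bound for the four special profiles. -/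
lemma special_term (q : ℕ × ℕ) (hm : 2 ≤ m) (hn : 2 ≤ n)
    (hη : 1 ≤ η) (hp1 : p ≤ 1) (hp0 : 0 ≤ p)
    (hc : ((m:ℝ)+n) * ((1+η) * Real.log ((m:ℝ)*n) + 1) / (((m:ℝ)-1)*((n:ℝ)-1)) ≤ p)
    (hq : q ∈ ({(1,0), (0,1), (m-1, n), (m, n-1)} : Finset (ℕ × ℕ))) :
    (m.choose q.1 : ℝ) * (n.choose q.2 : ℝ) * (1-p)^(q.1 * (n - q.2) + (m - q.1) * q.2)
      ≤ (m:ℝ) * n / 2 * Real.exp (-((1+η) * Real.log ((m:ℝ)*n) + 1)) := by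
  have hM : (2:ℝ) ≤ (m:ℝ) := by exact_mod_cast hm
  have hN : (2:ℝ) ≤ (n:ℝ) := by exact_mod_cast hn
  have hE0 : 0 ≤ Real.exp (-((1+η) * Real.log ((m:ℝ)*n) + 1)) := (Real.exp_pos _).le
  have hKcn : (1-p)^n ≤ Real.exp (-((1+η) * Real.log ((m:ℝ)*n) + 1)) := by
    apply pow_one_sub_le hp1 hp0
    calc (1+η) * Real.log ((m:ℝ)*n) + 1 ≤ _ * n := K_le_cn hm hn hη
      _ ≤ p * n := by
          apply mul_le_mul_of_nonneg_right hc (by positivity)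
  have hKcm : (1-p)^m ≤ Real.exp (-((1+η) * Real.log ((m:ℝ)*n) + 1)) := by
    apply pow_one_sub_le hp1 hp0
    calc (1+η) * Real.log ((m:ℝ)*n) + 1 ≤ _ * m := K_le_cm hm hn hη
      _ ≤ p * m := by
          apply mul_le_mul_of_nonneg_right hc (by positivity)
  have hpow_n : (0:ℝ) ≤ (1-p)^n := pow_nonneg (by linarith) _
  have hpow_m : (0:ℝ) ≤ (1-p)^m := pow_nonneg (by linarith) _
  have case_n : (m:ℝ) * (1-p)^n
      ≤ (m:ℝ) * n / 2 * Real.exp (-((1+η) * Real.log ((m:ℝ)*n) + 1)) := by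
    calc (m:ℝ) * (1-p)^n ≤ (m:ℝ) * Real.exp (-((1+η) * Real.log ((m:ℝ)*n) + 1)) :=
          mul_le_mul_of_nonneg_left hKcn (by linarith)
      _ ≤ (m:ℝ) * n / 2 * Real.exp (-((1+η) * Real.log ((m:ℝ)*n) + 1)) := by
          apply mul_le_mul_of_nonneg_right _ hE0
          nlinarith
  have case_m : (n:ℝ) * (1-p)^m
      ≤ (m:ℝ) * n / 2 * Real.exp (-((1+η) * Real.log ((m:ℝ)*n) + 1)) := by
    calc (n:ℝ) * (1-p)^m ≤ (n:ℝ) * Real.exp (-((1+η) * Real.log ((m:ℝ)*n) + 1)) :=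
          mul_le_mul_of_nonneg_left hKcm (by linarith)
      _ ≤ (m:ℝ) * n / 2 * Real.exp (-((1+η) * Real.log ((m:ℝ)*n) + 1)) := by
          apply mul_le_mul_of_nonneg_right _ hE0
          nlinarith
  simp only [Finset.mem_insert, Finset.mem_singleton] at hq
  rcases hq with h | h | h | h <;> subst h
  · -- (1,0)
    simpa [Nat.choose_one_right] using case_n
  · -- (0,1)
    simpa [Nat.choose_one_right] using case_m
  · -- (m-1, n)
    have h1 : m.choose (m - 1) = m := by
      rw [Nat.choose_symm (by omega : 1 ≤ m)]
      exact Nat.choose_one_right m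
    have h2 : (m - 1) * (n - n) + (m - (m - 1)) * n = n := by
      have : m - (m - 1) = 1 := by omega
      simp [this]
    rw [h2, h1]; simpa using case_n
  · -- (m, n-1)
    have h1 : n.choose (n - 1) = n := by
      rw [Nat.choose_symm (by omega : 1 ≤ n)]
      exact Nat.choose_one_right n
    have h2 : m * (n - (n - 1)) + (m - m) * (n - 1) = m := by
      have : n - (n - 1) = 1 := by omega
      simp [this]
    rw [h2, h1]; simpa using case_m


end Special

lemma pr_singleton_alltrue {α : Type*} [Fintype α] {p : ℝ} :
    pr p {ω : α → Bool | ω = fun _ => true} = p ^ (Fintype.card α) := by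
  classical
  rw [pr_eq]
  have h : evf {ω : α → Bool | ω = fun _ => true} = {fun _ => true} := by
    ext ω
    rw [mem_evf]
    simp [Set.mem_setOf_eq]
  rw [h, Finset.sum_singleton]
  simp [wgt, Finset.prod_const]


end PrAux

open PrAux

/-- For `m, n ≥ 2`, `η ≥ 1` and `p ≥ min{1, (m+n)((1+η) log(mn) + 1)/((m−1)(n−1))}`,
the random bipartite graph `G(m,n,p)` is connected with probability at least
`1 − 2(mn)^{−η} − 4(mn)^{−2η}`. -/
theorem stmt_5 (m n : ℕ) (hm : 2 ≤ m) (hn : 2 ≤ n) (η p : ℝ) (hη : 1 ≤ η)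
    (hp0 : 0 ≤ p) (hp1 : p ≤ 1)
    (hp : min 1 (((m : ℝ) + n) * ((1 + η) * Real.log (m * n) + 1) /
        (((m : ℝ) - 1) * ((n : ℝ) - 1))) ≤ p) :
    1 - 2 * ((m * n : ℕ) : ℝ) ^ (-η) - 4 * ((m * n : ℕ) : ℝ) ^ (-(2 * η))
      ≤ pr p {ω : Fin m × Fin n → Bool | (bipGraph m n ω).Connected} := by
  classical
  have hM : (2:ℝ) ≤ (m:ℝ) := by exact_mod_cast hm
  have hN : (2:ℝ) ≤ (n:ℝ) := by exact_mod_cast hn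
  have hNr_eq : ((m * n : ℕ) : ℝ) = (m:ℝ) * n := by push_cast; ring
  have hNrpos : (0:ℝ) < ((m * n : ℕ) : ℝ) := by rw [hNr_eq]; nlinarith
  have hr1 : (0:ℝ) ≤ ((m*n:ℕ):ℝ) ^ (-η) := Real.rpow_nonneg hNrpos.le _
  have hr2 : (0:ℝ) ≤ ((m*n:ℕ):ℝ) ^ (-(2*η)) := Real.rpow_nonneg hNrpos.le _
  rcases min_le_iff.mp hp with h1p | hc
  · -- p = 1 branch
    have hpeq : p = 1 := le_antisymm hp1 h1p
    subst hpeq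
    have hsub : {ω : Fin m × Fin n → Bool | ω = fun _ => true}
        ⊆ {ω : Fin m × Fin n → Bool | (bipGraph m n ω).Connected} := by
      intro ω hω
      rw [Set.mem_setOf_eq] at *
      rw [hω]
      exact bip_alltrue_connected (by omega) (by omega)
    have h2 : pr 1 {ω : Fin m × Fin n → Bool | ω = fun _ => true} = 1 := by
      rw [pr_singleton_alltrue]; simp
    have h3 := pr_mono (by norm_num : (0:ℝ) ≤ 1) (le_refl (1:ℝ)) hsub
    linarith
  · -- main branch
    -- the union bound over cuts
    set Conn := {ω : Fin m × Fin n → Bool | (bipGraph m n ω).Connected} with hConn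
    set J : Finset (Finset (Fin m) × Finset (Fin n)) :=
      Finset.univ.filter (fun P => ¬(P.1 = ∅ ∧ P.2 = ∅) ∧
        ¬(P.1 = Finset.univ ∧ P.2 = Finset.univ)) with hJ
    have hsub : Connᶜ ⊆ ⋃ P ∈ J,
        {ω : Fin m × Fin n → Bool | ∀ e ∈ cutF m n P.1 P.2, ω e = false} := by
      intro ω hω
      have hω' : ¬ (bipGraph m n ω).Connected := hω
      obtain ⟨P, hPgood, hPcut⟩ := disconn_cut (by omega : 0 < m) hω'
      refine Set.mem_iUnion₂.mpr ⟨P, ?_, hPcut⟩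
      rw [hJ, Finset.mem_filter]
      exact ⟨Finset.mem_univ _, hPgood⟩
    have hunion : pr p Connᶜ ≤ ∑ P ∈ J,
        (1-p)^(P.1.card * (n - P.2.card) + (m - P.1.card) * P.2.card) := by
      refine ((pr_mono hp0 hp1 hsub).trans (pr_biUnion_le hp0 hp1 J _)).trans ?_
      apply le_of_eq
      refine Finset.sum_congr rfl (fun P _ => ?_)
      rw [pr_allfalse hp0 hp1, card_cutF]
    -- reindex by profile
    set grid' : Finset (ℕ × ℕ) :=
      ((Finset.range (m+1)) ×ˢ (Finset.range (n+1))).filter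
        (fun q => ¬(q.1 = 0 ∧ q.2 = 0) ∧ ¬(q.1 = m ∧ q.2 = n)) with hgrid'
    have hmaps : ∀ P ∈ J, ((P.1.card, P.2.card) : ℕ × ℕ) ∈ grid' := by
      intro P hP
      rw [hJ, Finset.mem_filter] at hP
      obtain ⟨-, h1, h2⟩ := hP
      rw [hgrid', Finset.mem_filter, Finset.mem_product, Finset.mem_range, Finset.mem_range]
      refine ⟨⟨?_, ?_⟩, ?_, ?_⟩
      · have := Finset.card_le_univ P.1
        simp [Finset.card_univ] at this
        omega
      · have := Finset.card_le_univ P.2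
        simp [Finset.card_univ] at this
        omega
      · rintro ⟨ha, hb⟩
        exact h1 ⟨Finset.card_eq_zero.mp ha, Finset.card_eq_zero.mp hb⟩
      · rintro ⟨ha, hb⟩
        refine h2 ⟨?_, ?_⟩
        · apply (Finset.card_eq_iff_eq_univ P.1).mp
          rw [Fintype.card_fin]; exact ha
        · apply (Finset.card_eq_iff_eq_univ P.2).mp
          rw [Fintype.card_fin]; exact hb
    have hfib := Finset.sum_fiberwise_of_maps_to' hmaps
      (fun q : ℕ × ℕ => (1-p)^(q.1 * (n - q.2) + (m - q.1) * q.2))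
    have hfib' : ∑ P ∈ J, (1-p)^(P.1.card * (n - P.2.card) + (m - P.1.card) * P.2.card)
        = ∑ q ∈ grid', ∑ P ∈ J.filter (fun P => (P.1.card, P.2.card) = q),
            (1-p)^(q.1 * (n - q.2) + (m - q.1) * q.2) := hfib.symm
    -- inner fiber bound
    have hinner : ∀ q ∈ grid',
        (∑ P ∈ J.filter (fun P => (P.1.card, P.2.card) = q),
          (1-p)^(q.1 * (n - q.2) + (m - q.1) * q.2))
        ≤ (m.choose q.1 : ℝ) * (n.choose q.2 : ℝ)
            * (1-p)^(q.1 * (n - q.2) + (m - q.1) * q.2) := by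
      intro q hq
      rw [Finset.sum_const, nsmul_eq_mul]
      apply mul_le_mul_of_nonneg_right _ (pow_nonneg (by linarith) _)
      have hsubset : J.filter (fun P => (P.1.card, P.2.card) = q)
          ⊆ (Finset.univ.powersetCard q.1) ×ˢ (Finset.univ.powersetCard q.2) := by
        intro P hP
        rw [Finset.mem_filter] at hP
        obtain ⟨-, hPq⟩ := hP
        rw [Finset.mem_product, Finset.mem_powersetCard, Finset.mem_powersetCard]
        have e1 : P.1.card = q.1 := by rw [← hPq]
        have e2 : P.2.card = q.2 := by rw [← hPq]
        exact ⟨⟨Finset.subset_univ _, e1⟩, ⟨Finset.subset_univ _, e2⟩⟩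
      have hcard := Finset.card_le_card hsubset
      rw [Finset.card_product, Finset.card_powersetCard, Finset.card_powersetCard,
        Finset.card_univ, Finset.card_univ, Fintype.card_fin, Fintype.card_fin] at hcard
      exact_mod_cast hcard
    have hstep2 : pr p Connᶜ ≤ ∑ q ∈ grid',
        (m.choose q.1 : ℝ) * (n.choose q.2 : ℝ)
          * (1-p)^(q.1 * (n - q.2) + (m - q.1) * q.2) := by
      refine hunion.trans ?_
      rw [hfib']
      exact Finset.sum_le_sum hinner
    -- split off the special profiles
    set SP : Finset (ℕ × ℕ) := {(1,0), (0,1), (m-1, n), (m, n-1)} with hSP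
    set g : ℕ × ℕ → ℝ := fun q => (m.choose q.1 : ℝ) * (n.choose q.2 : ℝ)
      * (1-p)^(q.1 * (n - q.2) + (m - q.1) * q.2) with hg
    have hsplit : ∑ q ∈ grid', g q
        = ∑ q ∈ grid'.filter (fun q => q ∈ SP), g q
          + ∑ q ∈ grid'.filter (fun q => ¬ q ∈ SP), g q :=
      (Finset.sum_filter_add_sum_filter_not grid' (fun q => q ∈ SP) g).symm
    have hsp_bound : ∑ q ∈ grid'.filter (fun q => q ∈ SP), g q
        ≤ 4 * ((m:ℝ) * n / 2 * Real.exp (-((1+η) * Real.log ((m:ℝ)*n) + 1))) := by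
      have hW : (0:ℝ) ≤ (m:ℝ) * n / 2 * Real.exp (-((1+η) * Real.log ((m:ℝ)*n) + 1)) := by
        positivity
      refine (Finset.sum_le_card_nsmul _ _
        ((m:ℝ) * n / 2 * Real.exp (-((1+η) * Real.log ((m:ℝ)*n) + 1))) ?_).trans ?_
      · intro q hq
        rw [Finset.mem_filter] at hq
        exact special_term q hm hn hη hp1 hp0 hc hq.2
      · rw [nsmul_eq_mul]
        apply mul_le_mul_of_nonneg_right _ hW
        have hsub4 : grid'.filter (fun q => q ∈ SP) ⊆ SP :=
          fun q hq => (Finset.mem_filter.mp hq).2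
        have hSP4 : (SP.card : ℝ) ≤ 4 := by
          have c1 := Finset.card_insert_le ((1,0) : ℕ × ℕ) ({(0,1), (m-1, n), (m, n-1)} : Finset (ℕ × ℕ))
          have c2 := Finset.card_insert_le ((0,1) : ℕ × ℕ) ({(m-1, n), (m, n-1)} : Finset (ℕ × ℕ))
          have c3 := Finset.card_insert_le ((m-1, n) : ℕ × ℕ) ({(m, n-1)} : Finset (ℕ × ℕ))
          have c4 : ({(m, n-1)} : Finset (ℕ × ℕ)).card = 1 := Finset.card_singleton _
          rw [hSP]
          have : (insert ((1,0) : ℕ × ℕ) ({(0,1), (m-1, n), (m, n-1)} : Finset (ℕ × ℕ))).card ≤ 4 := by omega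
          exact_mod_cast this
        calc ((grid'.filter (fun q => q ∈ SP)).card : ℝ) ≤ (SP.card : ℝ) := by
              exact_mod_cast Finset.card_le_card hsub4
          _ ≤ 4 := hSP4
    have hrest_bound : ∑ q ∈ grid'.filter (fun q => ¬ q ∈ SP), g q
        ≤ ((m:ℝ)+1) * ((n:ℝ)+1) * Real.exp (-((1+η) * Real.log ((m:ℝ)*n) + 1)) := by
      refine (Finset.sum_le_card_nsmul _ _
        (Real.exp (-((1+η) * Real.log ((m:ℝ)*n) + 1))) ?_).trans ?_
      · intro q hq
        rw [Finset.mem_filter] at hq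
        obtain ⟨hq1, hq2⟩ := hq
        rw [hgrid', Finset.mem_filter, Finset.mem_product, Finset.mem_range,
          Finset.mem_range] at hq1
        obtain ⟨⟨ha, hb⟩, h1, h2⟩ := hq1
        have hnsp : ¬(q.1 = 1 ∧ q.2 = 0) ∧ ¬(q.1 = 0 ∧ q.2 = 1)
            ∧ ¬(q.1 = m - 1 ∧ q.2 = n) ∧ ¬(q.1 = m ∧ q.2 = n - 1) := by
          rw [hSP] at hq2
          simp only [Finset.mem_insert, Finset.mem_singleton, Prod.ext_iff] at hq2
          push_neg at hq2
          obtain ⟨s1, s2, s3, s4⟩ := hq2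
          refine ⟨?_, ?_, ?_, ?_⟩
          · rintro ⟨e1, e2⟩; exact (s1 e1) e2
          · rintro ⟨e1, e2⟩; exact (s2 e1) e2
          · rintro ⟨e1, e2⟩; exact (s3 e1) e2
          · rintro ⟨e1, e2⟩; exact (s4 e1) e2
        have := rest_term (m := m) (n := n) q.1 q.2 hm hn (by omega) (by omega) hη hp1 hc
          h1 h2 hnsp.1 hnsp.2.1 hnsp.2.2.1 hnsp.2.2.2
        calc g q = (m.choose q.1 : ℝ) * (n.choose q.2 : ℝ)
              * (1-p)^(q.1 * (n - q.2) + (m - q.1) * q.2) := by rw [hg]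
          _ ≤ _ := this
      · rw [nsmul_eq_mul]
        apply mul_le_mul_of_nonneg_right _ (Real.exp_pos _).le
        have hcard1 : (grid'.filter (fun q => ¬ q ∈ SP)).card ≤ grid'.card :=
          Finset.card_filter_le _ _
        have hcard2 : grid'.card ≤ (m+1) * (n+1) := by
          rw [hgrid']
          calc _ ≤ ((Finset.range (m+1)) ×ˢ (Finset.range (n+1))).card :=
                Finset.card_filter_le _ _
            _ = (m+1) * (n+1) := by rw [Finset.card_product, Finset.card_range,
                Finset.card_range]
        have : ((grid'.filter (fun q => ¬ q ∈ SP)).card : ℝ) ≤ ((m+1) * (n+1) : ℕ) := by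
          exact_mod_cast le_trans hcard1 hcard2
        calc ((grid'.filter (fun q => ¬ q ∈ SP)).card : ℝ) ≤ ((m+1) * (n+1) : ℕ) := this
          _ = ((m:ℝ)+1) * ((n:ℝ)+1) := by push_cast; ring
    -- numeric conclusion
    have hnum : 4 * ((m:ℝ) * n / 2 * Real.exp (-((1+η) * Real.log ((m:ℝ)*n) + 1)))
        + ((m:ℝ)+1) * ((n:ℝ)+1) * Real.exp (-((1+η) * Real.log ((m:ℝ)*n) + 1))
        ≤ 2 * ((m*n:ℕ):ℝ)^(-η) := by
      have hLrw : Real.log ((m:ℝ)*n) = Real.log ((m*n:ℕ):ℝ) := by rw [hNr_eq]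
      obtain ⟨L, hLdef⟩ : ∃ L, L = Real.log ((m*n:ℕ):ℝ) := ⟨_, rfl⟩
      have hrpow : ((m*n:ℕ):ℝ)^(-η) = Real.exp (-η * L) := by
        rw [Real.rpow_def_of_pos hNrpos, hLdef]; ring_nf
      have hexpL : (m:ℝ) * n = Real.exp L := by
        rw [hLdef, ← hNr_eq, Real.exp_log hNrpos]
      have hE : Real.exp (-((1+η) * Real.log ((m:ℝ)*n) + 1))
          = Real.exp (-((1+η) * L + 1)) := by rw [hLrw, hLdef]
      rw [hE, hrpow]
      have key : ((m:ℝ) * n * 2 + ((m:ℝ)+1) * ((n:ℝ)+1)) * Real.exp (-((1+η) * L + 1))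
          ≤ 2 * Real.exp (-η * L) := by
        have hmn94 : ((m:ℝ)+1) * ((n:ℝ)+1) ≤ (9/4) * ((m:ℝ) * n) := by nlinarith
        have e1 : Real.exp (-((1+η) * L + 1)) * Real.exp L
            = Real.exp (-η * L) * Real.exp (-1) := by
          rw [← Real.exp_add, ← Real.exp_add]; ring_nf
        have e2 : (17/4 : ℝ) * Real.exp (-1) ≤ 2 := by
          have h9 := Real.exp_one_gt_d9
          have h1 : Real.exp (-1) ≤ 1 / 2.7182818283 := by
            rw [Real.exp_neg, one_div]
            exact inv_anti₀ (by norm_num) h9.le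
          linarith
        have hEpos := Real.exp_pos (-((1+η) * L + 1))
        have hmnpos : (0:ℝ) < (m:ℝ) * n := by nlinarith
        calc ((m:ℝ) * n * 2 + ((m:ℝ)+1) * ((n:ℝ)+1)) * Real.exp (-((1+η) * L + 1))
            ≤ ((17/4) * ((m:ℝ) * n)) * Real.exp (-((1+η) * L + 1)) := by
              apply mul_le_mul_of_nonneg_right _ hEpos.le
              nlinarith
          _ = (17/4) * (Real.exp (-((1+η) * L + 1)) * Real.exp L) := by
              rw [hexpL]; ring
          _ = ((17/4) * Real.exp (-1)) * Real.exp (-η * L) := by rw [e1]; ring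
          _ ≤ 2 * Real.exp (-η * L) := by
              apply mul_le_mul_of_nonneg_right e2 (Real.exp_pos _).le
      nlinarith [Real.exp_pos (-((1+η) * L + 1))]
    -- put everything together
    have hD : pr p Connᶜ ≤ 2 * ((m*n:ℕ):ℝ)^(-η) := by
      refine hstep2.trans ?_
      calc ∑ q ∈ grid', g q
          = ∑ q ∈ grid'.filter (fun q => q ∈ SP), g q
            + ∑ q ∈ grid'.filter (fun q => ¬ q ∈ SP), g q := hsplit
        _ ≤ 4 * ((m:ℝ) * n / 2 * Real.exp (-((1+η) * Real.log ((m:ℝ)*n) + 1)))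
            + ((m:ℝ)+1) * ((n:ℝ)+1) * Real.exp (-((1+η) * Real.log ((m:ℝ)*n) + 1)) :=
              add_le_add hsp_bound hrest_bound
        _ ≤ 2 * ((m*n:ℕ):ℝ)^(-η) := hnum
    have hfinal := pr_compl hp0 hp1 Conn
    linarith
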